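/- Let (u₁, u₂) be a solution of the deformed Chern–Simons system with parameter ε ∈ [0,1] and exponents (β₁, β₂). Then the total magnetic fluxes are quantized: ∫_{ℝ²} e^{u₂}(1 − e^{u₁}) dx = 4π(β₁ + N₁) and ∫_{ℝ²} e^{u₁}(1 − e^{u₂}) dx = 4π(β₂ + N₂). -/

import Mathlib

open MeasureTheory Metric Filter

noncomputable section

/-- The Euclidean plane ℝ². -/
abbrev Plane := EuclideanSpace ℝ (Fin 2)

/-- The Laplacian of `f : ℝ² → ℝ`. -/
noncomputable def lap (f : Plane → ℝ) (x : Plane) : ℝ :=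
  ∑ i : Fin 2, iteratedFDeriv ℝ 2 f x (fun _ => EuclideanSpace.single i 1)

/-- The singular part `f_{ε}(x) = 2 ∑ⱼ ln|x - ε pⱼ|` attached to the vortex points
`ε p₁, …, ε p_N`. -/
noncomputable def fV {N : ℕ} (p : Fin N → Plane) (ε : ℝ) (x : Plane) : ℝ :=
  2 * ∑ j, Real.log ‖x - ε • p j‖

/-- The continuous function `e^{u} = (∏ⱼ |x - ε pⱼ|²) e^{v(x)}`, where `u = f_ε + v`. -/
noncomputable def eU {N : ℕ} (p : Fin N → Plane) (ε : ℝ) (v : Plane → ℝ) (x : Plane) : ℝ :=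
  (∏ j, ‖x - ε • p j‖ ^ 2) * Real.exp (v x)

/-- The full solution `u = f_ε + v`. -/
noncomputable def uF {N : ℕ} (p : Fin N → Plane) (ε : ℝ) (v : Plane → ℝ) (x : Plane) : ℝ :=
  fV p ε x + v x

/-- A solution of the deformed Chern–Simons system with parameter `ε` and exponents
`(β₁, β₂)`: a pair `uᵢ = f_{iε} + vᵢ` with `vᵢ ∈ C²(ℝ²)` such that
`Δv₁ + e^{u₂}(1 - e^{u₁}) = 0` and `Δv₂ + e^{u₁}(1 - e^{u₂}) = 0` on ℝ²
(with `e^{uᵢ}` the continuous functions `eU`), `u₁, u₂ < 0` off the vortex points,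
`uᵢ(x) + 2βᵢ ln|x|` bounded on `{|x| ≥ 1}`, and
`|x|·|∇vᵢ(x) + 2(βᵢ+Nᵢ)x/|x|²| → 0` as `|x| → ∞`. -/
structure CSsol (N₁ N₂ : ℕ) (p₁ : Fin N₁ → Plane) (p₂ : Fin N₂ → Plane)
    (β₁ β₂ ε : ℝ) : Type where
  v₁ : Plane → ℝ
  v₂ : Plane → ℝ
  cd₁ : ContDiff ℝ 2 v₁
  cd₂ : ContDiff ℝ 2 v₂
  pde₁ : ∀ x : Plane, lap v₁ x + eU p₂ ε v₂ x * (1 - eU p₁ ε v₁ x) = 0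
  pde₂ : ∀ x : Plane, lap v₂ x + eU p₁ ε v₁ x * (1 - eU p₂ ε v₂ x) = 0
  neg₁ : ∀ x : Plane, (∀ j, x ≠ ε • p₁ j) → uF p₁ ε v₁ x < 0
  neg₂ : ∀ x : Plane, (∀ j, x ≠ ε • p₂ j) → uF p₂ ε v₂ x < 0
  asymp₁ : ∃ C : ℝ, ∀ x : Plane, 1 ≤ ‖x‖ → |uF p₁ ε v₁ x + 2 * β₁ * Real.log ‖x‖| ≤ C
  asymp₂ : ∃ C : ℝ, ∀ x : Plane, 1 ≤ ‖x‖ → |uF p₂ ε v₂ x + 2 * β₂ * Real.log ‖x‖| ≤ C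
  grad₁ : ∀ δ : ℝ, 0 < δ → ∃ R : ℝ, ∀ x : Plane, R ≤ ‖x‖ →
    ‖x‖ * ‖gradient v₁ x + ((2 * (β₁ + (N₁ : ℝ))) / ‖x‖ ^ 2) • x‖ < δ
  grad₂ : ∀ δ : ℝ, 0 < δ → ∃ R : ℝ, ∀ x : Plane, R ≤ ‖x‖ →
    ‖x‖ * ‖gradient v₂ x + ((2 * (β₂ + (N₂ : ℝ))) / ‖x‖ ^ 2) • x‖ < δ

def eqv2 : Plane ≃L[ℝ] ℝ × ℝ :=
  (EuclideanSpace.equiv (Fin 2) ℝ).trans (ContinuousLinearEquiv.finTwoArrow ℝ ℝ)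

lemma eqv2_apply (x : Plane) : eqv2 x = (x 0, x 1) := rfl

lemma eqv2_symm_apply (z : ℝ × ℝ) (i : Fin 2) : eqv2.symm z i = ![z.1, z.2] i := rfl

lemma eqv2_mp : MeasurePreserving (eqv2 : Plane → ℝ × ℝ) := by
  have h1 := EuclideanSpace.volume_preserving_symm_measurableEquiv_toLp (Fin 2)
  have h2 := volume_preserving_finTwoArrow ℝ
  exact h2.comp h1

lemma eqv2_symm_one_zero : eqv2.symm (1, 0) = EuclideanSpace.single (0 : Fin 2) (1:ℝ) := by
  ext i
  fin_cases i <;> simp [eqv2_symm_apply, EuclideanSpace.single_apply]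

lemma eqv2_symm_zero_one : eqv2.symm (0, 1) = EuclideanSpace.single (1 : Fin 2) (1:ℝ) := by
  ext i
  fin_cases i <;> simp [eqv2_symm_apply, EuclideanSpace.single_apply]

lemma norm_symm_sq (z : ℝ × ℝ) : ‖eqv2.symm z‖ ^ 2 = z.1 ^ 2 + z.2 ^ 2 := by
  rw [EuclideanSpace.norm_eq]
  rw [Real.sq_sqrt (by positivity)]
  simp [Fin.sum_univ_two, eqv2_symm_apply, sq_abs]

lemma abs_coord_le_norm (x : Plane) (i : Fin 2) : |x i| ≤ ‖x‖ := by
  rw [EuclideanSpace.norm_eq]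
  have : |x i| = Real.sqrt (|x i| ^ 2) := by rw [Real.sqrt_sq_eq_abs, abs_abs]
  rw [this]
  apply Real.sqrt_le_sqrt
  exact Finset.single_le_sum (f := fun j => |x j| ^ 2) (fun j _ => by positivity) (Finset.mem_univ i)

lemma lap_eq (v : Plane → ℝ) (x : Plane) :
    lap v x = ∑ i : Fin 2, fderiv ℝ (fderiv ℝ v) x (EuclideanSpace.single i 1)
      (EuclideanSpace.single i 1) := by
  unfold lap
  congr 1; ext i
  rw [iteratedFDeriv_two_apply]

lemma fderiv_eq_inner_gradient (v : Plane → ℝ) (x w : Plane) :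
    fderiv ℝ v x w = inner (𝕜 := ℝ) (gradient v x) w := by
  rw [gradient, ← InnerProductSpace.toDual_apply_apply]
  simp

lemma component_bound (v : Plane → ℝ) (c : ℝ) (x : Plane) (i : Fin 2) :
    |fderiv ℝ v x (EuclideanSpace.single i 1) + (c / ‖x‖ ^ 2) * x i| ≤
      ‖gradient v x + (c / ‖x‖ ^ 2) • x‖ := by
  have h : fderiv ℝ v x (EuclideanSpace.single i 1) + (c / ‖x‖ ^ 2) * x i =
      inner (𝕜 := ℝ) (gradient v x + (c / ‖x‖ ^ 2) • x) (EuclideanSpace.single i 1) := by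
    rw [inner_add_left, fderiv_eq_inner_gradient]
    congr 1
    rw [real_inner_smul_left, EuclideanSpace.inner_single_right]
    simp [mul_comm]
  rw [h]
  calc |inner (𝕜 := ℝ) (gradient v x + (c / ‖x‖ ^ 2) • x) (EuclideanSpace.single i 1)|
      ≤ ‖gradient v x + (c / ‖x‖ ^ 2) • x‖ * ‖EuclideanSpace.single i (1:ℝ)‖ :=
        abs_real_inner_le_norm _ _
    _ = ‖gradient v x + (c / ‖x‖ ^ 2) • x‖ := by simp

lemma contDiff_fderiv_cont (v : Plane → ℝ) (hv : ContDiff ℝ 2 v) :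
    Continuous (fderiv ℝ v) := by
  have : ContDiff ℝ 1 (fderiv ℝ v) := hv.fderiv_right (by norm_num)
  exact this.continuous


lemma int_arct (R : ℝ) (hR : 0 < R) :
    ∫ y in (-R)..R, R / (R ^ 2 + y ^ 2) = Real.pi / 2 := by
  have hderiv : ∀ y ∈ Set.uIcc (-R) R, HasDerivAt (fun t => Real.arctan (t / R))
      (R / (R ^ 2 + y ^ 2)) y := by
    intro y _
    have h1 : HasDerivAt (fun t : ℝ => t / R) (1 / R) y := by
      simpa using (hasDerivAt_id y).div_const R
    have h2 := (Real.hasDerivAt_arctan (y / R)).comp y h1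
    refine h2.congr_deriv ?_
    field_simp
  have hint : IntervalIntegrable (fun y => R / (R ^ 2 + y ^ 2)) volume (-R) R := by
    apply Continuous.intervalIntegrable
    have : ∀ y : ℝ, R ^ 2 + y ^ 2 ≠ 0 := fun y => by positivity
    exact continuous_const.div (by continuity) this
  rw [intervalIntegral.integral_eq_sub_of_hasDerivAt hderiv hint]
  have : (R : ℝ) / R = 1 := div_self hR.ne'
  rw [neg_div, this, Real.arctan_one, Real.arctan_neg, Real.arctan_one]
  ring

lemma side_est (h : ℝ → ℝ) (c s R δ : ℝ) (hR : 0 < R)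
    (hc : ContinuousOn h (Set.uIcc (-R) R))
    (hb : ∀ y ∈ Set.uIcc (-R) R, |h y + c * s / (R ^ 2 + y ^ 2)| ≤ δ / R) :
    |(∫ y in (-R)..R, h y) + s / R * (c * Real.pi / 2)| ≤ 2 * δ := by
  have h2 : ∀ y : ℝ, R ^ 2 + y ^ 2 ≠ 0 := fun y => by positivity
  have hratc : Continuous fun y : ℝ => c * s / (R ^ 2 + y ^ 2) :=
    continuous_const.div (by continuity) h2
  have hint1 : IntervalIntegrable h volume (-R) R :=
    hc.intervalIntegrable
  have hint2 : IntervalIntegrable (fun y => c * s / (R ^ 2 + y ^ 2)) volume (-R) R :=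
    hratc.intervalIntegrable _ _
  have hsplit : (∫ y in (-R)..R, h y) =
      (∫ y in (-R)..R, (h y + c * s / (R ^ 2 + y ^ 2)))
        - ∫ y in (-R)..R, c * s / (R ^ 2 + y ^ 2) := by
    rw [intervalIntegral.integral_add hint1 hint2]
    ring
  have hval : (∫ y in (-R)..R, c * s / (R ^ 2 + y ^ 2)) = s / R * (c * Real.pi / 2) := by
    have : ∀ y : ℝ, c * s / (R ^ 2 + y ^ 2) = (c * s / R) * (R / (R ^ 2 + y ^ 2)) := by
      intro y; field_simp
    simp_rw [this]
    rw [intervalIntegral.integral_const_mul, int_arct R hR]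
    field_simp
  have hbnd : |∫ y in (-R)..R, (h y + c * s / (R ^ 2 + y ^ 2))| ≤ δ / R * |R - (-R)| := by
    rw [← Real.norm_eq_abs]
    apply intervalIntegral.norm_integral_le_of_norm_le_const
    intro y hy
    rw [Real.norm_eq_abs]
    exact hb y (Set.uIoc_subset_uIcc hy)
  rw [hsplit, hval]
  have : |R - (-R)| = 2 * R := by rw [abs_of_pos (by linarith)]; ring
  rw [this] at hbnd
  have : δ / R * (2 * R) = 2 * δ := by field_simp
  rw [this] at hbnd
  calc |(∫ y in (-R)..R, (h y + c * s / (R ^ 2 + y ^ 2))) - s / R * (c * Real.pi / 2) +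
        s / R * (c * Real.pi / 2)| = |∫ y in (-R)..R, (h y + c * s / (R ^ 2 + y ^ 2))| := by
        congr 1; ring
    _ ≤ 2 * δ := hbnd


lemma divergence_step (v F : Plane → ℝ) (hv : ContDiff ℝ 2 v) (hF : Continuous F)
    (hlap : ∀ x, lap v x = - F x) (R : ℝ) (hR : 0 ≤ R) :
    (∫ z in Set.Icc ((-R, -R) : ℝ × ℝ) (R, R), F (eqv2.symm z)) =
      -(((((∫ x in (-R)..R, fderiv ℝ v (eqv2.symm (x, R)) (EuclideanSpace.single 1 1)) -
        ∫ x in (-R)..R, fderiv ℝ v (eqv2.symm (x, -R)) (EuclideanSpace.single 1 1)) +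
        ∫ y in (-R)..R, fderiv ℝ v (eqv2.symm (R, y)) (EuclideanSpace.single 0 1)) -
        ∫ y in (-R)..R, fderiv ℝ v (eqv2.symm (-R, y)) (EuclideanSpace.single 0 1))) := by
  have hΦd : Differentiable ℝ (fderiv ℝ v) :=
    (hv.fderiv_right (m := 1) (by norm_num)).differentiable (by norm_num)
  set σL : ℝ × ℝ →L[ℝ] Plane := (eqv2.symm : ℝ × ℝ →L[ℝ] Plane) with hσL
  set f : ℝ × ℝ → ℝ := fun z => fderiv ℝ v (eqv2.symm z) (EuclideanSpace.single 0 1) with hf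
  set g : ℝ × ℝ → ℝ := fun z => fderiv ℝ v (eqv2.symm z) (EuclideanSpace.single 1 1) with hg
  set f' : ℝ × ℝ → ℝ × ℝ →L[ℝ] ℝ := fun z =>
    ((ContinuousLinearMap.apply ℝ ℝ (EuclideanSpace.single 0 1)).comp
      (fderiv ℝ (fderiv ℝ v) (eqv2.symm z))).comp σL with hf'
  set g' : ℝ × ℝ → ℝ × ℝ →L[ℝ] ℝ := fun z =>
    ((ContinuousLinearMap.apply ℝ ℝ (EuclideanSpace.single 1 1)).comp
      (fderiv ℝ (fderiv ℝ v) (eqv2.symm z))).comp σL with hg'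
  have hdiv : ∀ z : ℝ × ℝ, f' z (1, 0) + g' z (0, 1) = - F (eqv2.symm z) := by
    intro z
    rw [← hlap, lap_eq]
    have h10 : σL (1, 0) = EuclideanSpace.single (0 : Fin 2) (1:ℝ) := by
      simpa [hσL] using eqv2_symm_one_zero
    have h01 : σL (0, 1) = EuclideanSpace.single (1 : Fin 2) (1:ℝ) := by
      simpa [hσL] using eqv2_symm_zero_one
    simp [hf', hg', h10, h01, Fin.sum_univ_two, ContinuousLinearMap.comp_apply,
      ContinuousLinearMap.apply_apply]
  have hd : ∀ (w : Plane) (z : ℝ × ℝ), HasFDerivAt (fun z => fderiv ℝ v (eqv2.symm z) w)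
      (((ContinuousLinearMap.apply ℝ ℝ w).comp
        (fderiv ℝ (fderiv ℝ v) (eqv2.symm z))).comp σL) z := by
    intro w z
    have h1 : HasFDerivAt (eqv2.symm : ℝ × ℝ → Plane) σL z := eqv2.symm.hasFDerivAt
    have h2 : HasFDerivAt (fderiv ℝ v) (fderiv ℝ (fderiv ℝ v) (eqv2.symm z)) (eqv2.symm z) :=
      (hΦd (eqv2.symm z)).hasFDerivAt
    exact ((ContinuousLinearMap.apply ℝ ℝ w).hasFDerivAt.comp _ h2).comp z h1
  have hcB : Continuous fun z : ℝ × ℝ => fderiv ℝ v (eqv2.symm z) := by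
    exact (contDiff_fderiv_cont v hv).comp eqv2.symm.continuous
  have hcf : Continuous f := hcB.clm_apply continuous_const
  have hcg : Continuous g := hcB.clm_apply continuous_const
  have hle : ((-R, -R) : ℝ × ℝ) ≤ (R, R) := ⟨by simpa using neg_le_self hR, by simpa using neg_le_self hR⟩
  have Hi : IntegrableOn (fun z => f' z (1, 0) + g' z (0, 1))
      (Set.Icc ((-R, -R) : ℝ × ℝ) (R, R)) := by
    have : (fun z : ℝ × ℝ => f' z (1, 0) + g' z (0, 1)) = fun z => - F (eqv2.symm z) := by
      ext z; exact hdiv z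
    rw [this]
    exact ((hF.comp eqv2.symm.continuous).neg.locallyIntegrable.integrableOn_isCompact isCompact_Icc)
  have key := integral_divergence_prod_Icc_of_hasFDerivAt_off_countable_of_le f g f' g'
    (-R, -R) (R, R) hle ∅ Set.countable_empty hcf.continuousOn hcg.continuousOn
    (fun x _ => hd _ x) (fun x _ => hd _ x) Hi
  have hL : (∫ z in Set.Icc ((-R, -R) : ℝ × ℝ) (R, R), f' z (1, 0) + g' z (0, 1)) =
      - ∫ z in Set.Icc ((-R, -R) : ℝ × ℝ) (R, R), F (eqv2.symm z) := by
    rw [← integral_neg]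
    exact setIntegral_congr_fun measurableSet_Icc fun z _ => hdiv z
  rw [hL] at key
  have key' : -(∫ z in Set.Icc ((-R, -R) : ℝ × ℝ) (R, R), F (eqv2.symm z)) =
      (((∫ x in (-R)..R, g (x, R)) - ∫ x in (-R)..R, g (x, -R)) +
        ∫ y in (-R)..R, f (R, y)) - ∫ y in (-R)..R, f (-R, y) := key
  simp only [hf, hg] at key'
  linarith [key']


theorem flux_quant (v F : Plane → ℝ) (c : ℝ) (hv : ContDiff ℝ 2 v) (hF : Continuous F)
    (hF0 : ∀ x, 0 ≤ F x) (hlap : ∀ x, lap v x = - F x)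
    (hgrad : ∀ δ : ℝ, 0 < δ → ∃ R : ℝ, ∀ x : Plane, R ≤ ‖x‖ →
      ‖x‖ * ‖gradient v x + (c / ‖x‖ ^ 2) • x‖ < δ) :
    Integrable F ∧ (∫ x, F x) = 2 * Real.pi * c := by
  have hemb : MeasurableEmbedding (eqv2 : Plane → ℝ × ℝ) :=
    eqv2.toHomeomorph.measurableEmbedding
  set S : ℝ → Set Plane := fun R => eqv2 ⁻¹' Set.Icc (-R, -R) (R, R) with hS
  set I : ℝ → ℝ := fun R => ∫ x in S R, F x with hI
  -- transfer of set integrals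
  have hIS : ∀ R : ℝ, (∫ z in Set.Icc ((-R, -R) : ℝ × ℝ) (R, R), F (eqv2.symm z)) = I R := by
    intro R
    have := eqv2_mp.setIntegral_preimage_emb hemb (fun z => F (eqv2.symm z))
      (Set.Icc (-R, -R) (R, R))
    simpa using this.symm
  -- main estimate
  have hest : ∀ δ : ℝ, 0 < δ → ∃ R₀ : ℝ, 1 ≤ R₀ ∧ ∀ R : ℝ, R₀ ≤ R →
      |I R - 2 * Real.pi * c| ≤ 8 * δ := by
    intro δ hδ
    obtain ⟨R₁, hR₁⟩ := hgrad δ hδ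
    refine ⟨max R₁ 1, le_max_right _ _, fun R hR => ?_⟩
    have hR1 : (1 : ℝ) ≤ R := le_trans (le_max_right _ _) hR
    have hRpos : (0 : ℝ) < R := lt_of_lt_of_le one_pos hR1
    have hRR₁ : R₁ ≤ R := le_trans (le_max_left _ _) hR
    -- the generic bound on a side point
    have hpt : ∀ x : Plane, R ≤ ‖x‖ → ∀ i : Fin 2,
        |fderiv ℝ v x (EuclideanSpace.single i 1) + c / ‖x‖ ^ 2 * x i| ≤ δ / R := by
      intro x hx i
      have hxR : R₁ ≤ ‖x‖ := le_trans hRR₁ hx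
      have hxpos : (0 : ℝ) < ‖x‖ := lt_of_lt_of_le hRpos hx
      have h1 := component_bound v c x i
      have h2 := hR₁ x hxR
      have h3 : ‖gradient v x + (c / ‖x‖ ^ 2) • x‖ ≤ δ / ‖x‖ := by
        rw [le_div_iff₀ hxpos, mul_comm]
        exact le_of_lt h2
      have h4 : δ / ‖x‖ ≤ δ / R := by
        apply div_le_div_of_nonneg_left (le_of_lt hδ) hRpos hx
      linarith
    -- a lemma giving the side estimate for parametrizations
    have hside : ∀ (φ : ℝ → Plane) (i : Fin 2) (s : ℝ),
        Continuous φ → (∀ y, R ≤ ‖φ y‖) → (∀ y, ‖φ y‖ ^ 2 = R ^ 2 + y ^ 2) →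
        (∀ y, φ y i = s) →
        |(∫ y in (-R)..R, fderiv ℝ v (φ y) (EuclideanSpace.single i 1)) +
          s / R * (c * Real.pi / 2)| ≤ 2 * δ := by
      intro φ i s hφc hφn hφsq hφi
      apply side_est _ c s R δ hRpos
      · exact (((contDiff_fderiv_cont v hv).comp hφc).clm_apply continuous_const).continuousOn
      · intro y _
        have := hpt (φ y) (hφn y) i
        have hrw : c / ‖φ y‖ ^ 2 * (φ y) i = c * s / (R ^ 2 + y ^ 2) := by
          rw [hφsq, hφi]; ring
        rw [hrw] at this
        exact this
    have hnorm_ge : ∀ z : ℝ × ℝ, (|z.1| = R ∨ |z.2| = R) → R ≤ ‖eqv2.symm z‖ := by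
      rintro z (h | h)
      · calc R = |z.1| := h.symm
          _ = |(eqv2.symm z) 0| := by rw [eqv2_symm_apply]; rfl
          _ ≤ ‖eqv2.symm z‖ := abs_coord_le_norm _ _
      · calc R = |z.2| := h.symm
          _ = |(eqv2.symm z) 1| := by rw [eqv2_symm_apply]; rfl
          _ ≤ ‖eqv2.symm z‖ := abs_coord_le_norm _ _
    -- the four sides
    have hcont1 : Continuous (fun x : ℝ => eqv2.symm (x, R)) :=
      eqv2.symm.continuous.comp (continuous_id.prodMk continuous_const)
    have hcont2 : Continuous (fun x : ℝ => eqv2.symm (x, -R)) :=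
      eqv2.symm.continuous.comp (continuous_id.prodMk continuous_const)
    have hcont3 : Continuous (fun y : ℝ => eqv2.symm (R, y)) :=
      eqv2.symm.continuous.comp (continuous_const.prodMk continuous_id)
    have hcont4 : Continuous (fun y : ℝ => eqv2.symm (-R, y)) :=
      eqv2.symm.continuous.comp (continuous_const.prodMk continuous_id)
    have habsR : |R| = R := abs_of_pos hRpos
    have habsR' : |-R| = R := by rw [abs_neg]; exact habsR
    have hT1 := hside (fun x => eqv2.symm (x, R)) 1 R hcont1
      (fun y => hnorm_ge (y, R) (Or.inr habsR))
      (fun y => by rw [norm_symm_sq]; try ring)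
      (fun y => by show eqv2.symm _ _ = _; rw [eqv2_symm_apply]; simp)
    have hT2 := hside (fun x => eqv2.symm (x, -R)) 1 (-R) hcont2
      (fun y => hnorm_ge (y, -R) (Or.inr habsR'))
      (fun y => by rw [norm_symm_sq]; try ring)
      (fun y => by show eqv2.symm _ _ = _; rw [eqv2_symm_apply]; simp)
    have hT3 := hside (fun y => eqv2.symm (R, y)) 0 R hcont3
      (fun y => hnorm_ge (R, y) (Or.inl habsR))
      (fun y => by rw [norm_symm_sq]; try ring)
      (fun y => by show eqv2.symm _ _ = _; rw [eqv2_symm_apply]; simp)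
    have hT4 := hside (fun y => eqv2.symm (-R, y)) 0 (-R) hcont4
      (fun y => hnorm_ge (-R, y) (Or.inl habsR'))
      (fun y => by rw [norm_symm_sq]; try ring)
      (fun y => by show eqv2.symm _ _ = _; rw [eqv2_symm_apply]; simp)
    have hdiv := divergence_step v F hv hF hlap R (le_of_lt hRpos)
    rw [hIS R] at hdiv
    have hRdiv : R / R = 1 := div_self hRpos.ne'
    have hRdiv' : -R / R = -1 := by rw [neg_div, hRdiv]
    rw [hRdiv] at hT1 hT3
    rw [hRdiv'] at hT2 hT4
    simp only [one_mul, neg_one_mul] at hT1 hT2 hT3 hT4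
    rw [abs_le] at hT1 hT2 hT3 hT4
    rw [hdiv, abs_le]
    constructor <;> linarith [hT1.1, hT1.2, hT2.1, hT2.2, hT3.1, hT3.2, hT4.1, hT4.2]
  -- limit along integers
  set Sn : ℕ → Set Plane := fun n => S ((n : ℝ) + 1) with hSn
  have hSmeas : ∀ n, MeasurableSet (Sn n) := fun n =>
    (isClosed_Icc.preimage eqv2.continuous).measurableSet
  have hScompact : ∀ n, IsCompact (Sn n) := by
    intro n
    have himg : Sn n = eqv2.symm ''
        Set.Icc (-((n:ℝ)+1), -((n:ℝ)+1)) (((n:ℝ)+1), ((n:ℝ)+1)) := by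
      ext x
      constructor
      · intro hx; exact ⟨eqv2 x, hx, by simp⟩
      · rintro ⟨z, hz, rfl⟩
        exact Set.mem_preimage.mpr (by rw [ContinuousLinearEquiv.apply_symm_apply]; exact hz)
    rw [himg]
    exact isCompact_Icc.image eqv2.symm.continuous
  have hSint : ∀ n, IntegrableOn F (Sn n) := fun n =>
    hF.locallyIntegrable.integrableOn_isCompact (hScompact n)
  have hSmono : Monotone Sn := by
    intro n m hnm
    apply Set.preimage_mono
    have hcast : ((n : ℝ) + 1) ≤ (m : ℝ) + 1 := by
      have : (n : ℝ) ≤ (m : ℝ) := Nat.cast_le.mpr hnm; linarith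
    apply Set.Icc_subset_Icc
    · exact ⟨by dsimp; linarith, by dsimp; linarith⟩
    · exact ⟨by dsimp; linarith, by dsimp; linarith⟩
  have hUnion : (⋃ n, Sn n) = Set.univ := by
    ext x
    simp only [Set.mem_iUnion, Set.mem_univ, iff_true]
    obtain ⟨n, hn⟩ := exists_nat_ge (max |(eqv2 x).1| |(eqv2 x).2|)
    have h1 : |(eqv2 x).1| ≤ (n : ℝ) + 1 := by
      have := le_trans (le_max_left _ _) hn; linarith
    have h2 : |(eqv2 x).2| ≤ (n : ℝ) + 1 := by
      have := le_trans (le_max_right _ _) hn; linarith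
    rw [abs_le] at h1 h2
    exact ⟨n, ⟨⟨h1.1, h2.1⟩, ⟨h1.2, h2.2⟩⟩⟩
  have hJ : Tendsto (fun n : ℕ => I ((n : ℝ) + 1)) atTop (nhds (2 * Real.pi * c)) := by
    rw [Metric.tendsto_atTop]
    intro ε hε
    obtain ⟨R₀, hR₀1, hR₀⟩ := hest (ε / 9) (by positivity)
    obtain ⟨N, hN⟩ := exists_nat_ge R₀
    refine ⟨N, fun n hn => ?_⟩
    have : R₀ ≤ (n : ℝ) + 1 := by
      have h1 : (N : ℝ) ≤ (n : ℝ) := Nat.cast_le.mpr hn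
      linarith
    have := hR₀ _ this
    rw [Real.dist_eq]
    linarith
  have hmonoJ : Monotone (fun n : ℕ => I ((n : ℝ) + 1)) := by
    intro n m hnm
    exact setIntegral_mono_set (hSint m) (Filter.Eventually.of_forall hF0)
      ((Set.le_iff_subset.mp (hSmono hnm)).eventuallyLE)
  have hle : ∀ n : ℕ, I ((n : ℝ) + 1) ≤ 2 * Real.pi * c := fun n =>
    ge_of_tendsto hJ (Filter.eventually_atTop.2 ⟨n, fun m hm => hmonoJ hm⟩)
  have hmeasF : Measurable fun x : Plane => ENNReal.ofReal (F x) :=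
    hF.measurable.ennreal_ofReal
  have hlin : ∀ n : ℕ, (∫⁻ x in Sn n, ENNReal.ofReal (F x)) =
      ENNReal.ofReal (I ((n : ℝ) + 1)) := by
    intro n
    rw [← ofReal_integral_eq_lintegral_ofReal (hSint n) (Filter.Eventually.of_forall hF0)]
  have hsup : (∫⁻ x, ENNReal.ofReal (F x)) = ⨆ n, ∫⁻ x in Sn n, ENNReal.ofReal (F x) := by
    have hpt2 : ∀ x : Plane,
        (⨆ n, (Sn n).indicator (fun x => ENNReal.ofReal (F x)) x) = ENNReal.ofReal (F x) := by
      intro x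
      apply le_antisymm
      · exact iSup_le fun n => Set.indicator_le_self _ _ x
      · obtain ⟨n, hn⟩ : ∃ n, x ∈ Sn n := by
          have hx : x ∈ ⋃ n, Sn n := by rw [hUnion]; trivial
          simpa [Set.mem_iUnion] using hx
        calc ENNReal.ofReal (F x)
            = (Sn n).indicator (fun x => ENNReal.ofReal (F x)) x :=
              (Set.indicator_of_mem hn (fun x => ENNReal.ofReal (F x))).symm
          _ ≤ ⨆ n, (Sn n).indicator (fun x => ENNReal.ofReal (F x)) x :=
              le_iSup (fun n => (Sn n).indicator (fun x => ENNReal.ofReal (F x)) x) n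
    calc (∫⁻ x, ENNReal.ofReal (F x))
        = ∫⁻ x, ⨆ n, (Sn n).indicator (fun x => ENNReal.ofReal (F x)) x := by
          congr 1; ext x; rw [hpt2]
      _ = ⨆ n, ∫⁻ x, (Sn n).indicator (fun x => ENNReal.ofReal (F x)) x :=
          lintegral_iSup (fun n => hmeasF.indicator (hSmeas n))
            (fun n m hnm x =>
              Set.indicator_le_indicator_of_subset (hSmono hnm) (fun _ => zero_le) x)
      _ = ⨆ n, ∫⁻ x in Sn n, ENNReal.ofReal (F x) := by
          congr 1; ext n; rw [lintegral_indicator (hSmeas n)]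
  have hfin : (∫⁻ x, ENNReal.ofReal (F x)) < ⊤ := by
    rw [hsup]
    refine lt_of_le_of_lt (iSup_le fun n => ?_)
      (ENNReal.ofReal_lt_top : ENNReal.ofReal (2 * Real.pi * c) < ⊤)
    rw [hlin n]
    exact ENNReal.ofReal_le_ofReal (hle n)
  have hInt : Integrable F := by
    refine ⟨hF.aestronglyMeasurable, ?_⟩
    rw [hasFiniteIntegral_iff_ofReal (Filter.Eventually.of_forall hF0)]
    exact hfin
  have htend := tendsto_setIntegral_of_monotone hSmeas hSmono
    (by rw [hUnion]; exact hInt.integrableOn)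
  rw [hUnion, setIntegral_univ] at htend
  exact ⟨hInt, tendsto_nhds_unique htend hJ⟩


lemma eU_cont {N : ℕ} (p : Fin N → Plane) (ε : ℝ) (v : Plane → ℝ) (hv : Continuous v) :
    Continuous (eU p ε v) := by
  unfold eU
  exact (continuous_finset_prod _ fun j _ =>
    ((continuous_id.sub continuous_const).norm.pow 2)).mul (Real.continuous_exp.comp hv)

lemma eU_nonneg {N : ℕ} (p : Fin N → Plane) (ε : ℝ) (v : Plane → ℝ) (x : Plane) :
    0 ≤ eU p ε v x :=
  mul_nonneg (Finset.prod_nonneg fun j _ => by positivity) (Real.exp_pos _).le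

lemma eU_eq_exp {N : ℕ} (p : Fin N → Plane) (ε : ℝ) (v : Plane → ℝ) (x : Plane)
    (h : ∀ j, x ≠ ε • p j) : eU p ε v x = Real.exp (uF p ε v x) := by
  unfold eU uF fV
  rw [Real.exp_add]
  congr 1
  rw [Finset.mul_sum, Real.exp_sum]
  apply Finset.prod_congr rfl
  intro j _
  have hpos : 0 < ‖x - ε • p j‖ := by
    rw [norm_pos_iff, sub_ne_zero]
    exact h j
  rw [two_mul, Real.exp_add, Real.exp_log hpos, sq]

lemma eU_le_one {N : ℕ} (p : Fin N → Plane) (ε : ℝ) (v : Plane → ℝ)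
    (h : ∀ x : Plane, (∀ j, x ≠ ε • p j) → uF p ε v x < 0) (x : Plane) :
    eU p ε v x ≤ 1 := by
  by_cases hx : ∀ j, x ≠ ε • p j
  · rw [eU_eq_exp p ε v x hx]
    rw [← Real.exp_zero]
    exact (Real.exp_lt_exp.mpr (h x hx)).le
  · push_neg at hx
    obtain ⟨j, hj⟩ := hx
    unfold eU
    have hz : (∏ j', ‖x - ε • p j'‖ ^ 2) = 0 :=
      Finset.prod_eq_zero (Finset.mem_univ j) (by rw [hj]; simp)
    rw [hz, zero_mul]
    exact zero_le_one


/-- Flux quantization for solutions of the deformed Chern–Simons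
system: `∫ e^{u₂}(1 - e^{u₁}) = 4π(β₁ + N₁)` and `∫ e^{u₁}(1 - e^{u₂}) = 4π(β₂ + N₂)`. -/
theorem stmt9 (N₁ N₂ : ℕ) (p₁ : Fin N₁ → Plane) (p₂ : Fin N₂ → Plane)
    (β₁ β₂ : ℝ) (hβ₁ : 1 < β₁) (hβ₂ : 1 < β₂)
    (hcond : (β₁ - 1) * (β₂ - 1) > ((N₁ : ℝ) + 1) * ((N₂ : ℝ) + 1))
    (ε : ℝ) (hε : ε ∈ Set.Icc (0 : ℝ) 1)
    (sol : CSsol N₁ N₂ p₁ p₂ β₁ β₂ ε) :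
    (∫ x : Plane, eU p₂ ε sol.v₂ x * (1 - eU p₁ ε sol.v₁ x)) =
        4 * Real.pi * (β₁ + (N₁ : ℝ)) ∧
      (∫ x : Plane, eU p₁ ε sol.v₁ x * (1 - eU p₂ ε sol.v₂ x)) =
        4 * Real.pi * (β₂ + (N₂ : ℝ)) := by
  constructor
  · have h := flux_quant sol.v₁ (fun x => eU p₂ ε sol.v₂ x * (1 - eU p₁ ε sol.v₁ x))
      (2 * (β₁ + (N₁ : ℝ))) sol.cd₁
      (((eU_cont p₂ ε sol.v₂ sol.cd₂.continuous)).mul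
        (continuous_const.sub (eU_cont p₁ ε sol.v₁ sol.cd₁.continuous)))
      (fun x => mul_nonneg (eU_nonneg p₂ ε sol.v₂ x)
        (by have := eU_le_one p₁ ε sol.v₁ sol.neg₁ x; linarith))
      (fun x => by have := sol.pde₁ x; linarith)
      sol.grad₁
    exact h.2.trans (by ring)
  · have h := flux_quant sol.v₂ (fun x => eU p₁ ε sol.v₁ x * (1 - eU p₂ ε sol.v₂ x))
      (2 * (β₂ + (N₂ : ℝ))) sol.cd₂
      (((eU_cont p₁ ε sol.v₁ sol.cd₁.continuous)).mul
        (continuous_const.sub (eU_cont p₂ ε sol.v₂ sol.cd₂.continuous)))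
      (fun x => mul_nonneg (eU_nonneg p₁ ε sol.v₁ x)
        (by have := eU_le_one p₂ ε sol.v₂ sol.neg₂ x; linarith))
      (fun x => by have := sol.pde₂ x; linarith)
      sol.grad₂
    exact h.2.trans (by ring)
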